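/- On the Iwasawa Lie algebra (dφ¹ = dφ² = 0, dφ³ = -φ¹∧φ²), the almost complex structure defined by declaring ω¹ = φ¹, ω² = φ² + φ̄³, ω³ = φ³ to be (1,0)-forms is well-defined and has Nijenhuis rank exactly 1. -/

import Mathlib

open Matrix

noncomputable section

/-- Complexification of a real matrix. -/
def cplx {n : ℕ} (A : Matrix (Fin n) (Fin n) ℝ) : Matrix (Fin n) (Fin n) ℂ :=
  A.map Complex.ofReal

/-- The projector `(1/2)(Id + iJ)` of `V ⊗ ℂ` onto the `-i`-eigenspace `V^{0,1}` of the
complexified almost complex structure `J`. -/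
def P01 {n : ℕ} (J : Matrix (Fin n) (Fin n) ℝ) : Matrix (Fin n) (Fin n) ℂ :=
  (2⁻¹ : ℂ) • (1 + Complex.I • cplx J)

/-- The `(0,2)`-part of a complex 2-form `ω` (written as an antisymmetric matrix in the
real basis) with respect to the bigrading induced by `J`: `ω^{0,2}(x,y) = ω(P01 x, P01 y)`. -/
def proj02 {n : ℕ} (J : Matrix (Fin n) (Fin n) ℝ) (ω : Matrix (Fin n) (Fin n) ℂ) :
    Matrix (Fin n) (Fin n) ℂ :=
  (P01 J)ᵀ * ω * P01 J

/-- The Chevalley–Eilenberg differential on complex 1-forms, determined by its values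
`Dd r = d e^r` on the dual basis: `d(Σ α_r e^r) = Σ α_r · (d e^r)`. -/
def dC {n : ℕ} (Dd : Fin n → Matrix (Fin n) (Fin n) ℝ) (α : Fin n → ℂ) :
    Matrix (Fin n) (Fin n) ℂ :=
  ∑ r, α r • cplx (Dd r)

/-- The Chevalley–Eilenberg differential on real 1-forms, as a linear map. -/
def dR {n : ℕ} (Dd : Fin n → Matrix (Fin n) (Fin n) ℝ) :
    (Fin n → ℝ) →ₗ[ℝ] Matrix (Fin n) (Fin n) ℝ :=
  ∑ r, (LinearMap.proj r : (Fin n → ℝ) →ₗ[ℝ] ℝ).smulRight (Dd r)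

/-- The rank of the Nijenhuis tensor of the almost complex structure `J`: the complex
dimension of the image of `μ̄ = π^{0,2} ∘ d` on `(1,0)`-forms.  A complex covector `α` is
of type `(1,0)` iff it annihilates `V^{0,1}`, i.e. `α ∘ P01 = 0`. -/
def nijRank {n : ℕ} (Dd : Fin n → Matrix (Fin n) (Fin n) ℝ)
    (J : Matrix (Fin n) (Fin n) ℝ) : ℕ :=
  Module.finrank ℂ (Submodule.span ℂ
    {ω : Matrix (Fin n) (Fin n) ℂ |
      ∃ α : Fin n → ℂ, Matrix.vecMul α (P01 J) = 0 ∧ ω = proj02 J (dC Dd α)})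

/-- The 2-form `e^a ∧ e^b`, as an antisymmetric matrix. -/
def wR (a b : Fin 6) : Matrix (Fin 6) (Fin 6) ℝ :=
  fun p q => (if p = a ∧ q = b then 1 else 0) - (if p = b ∧ q = a then 1 else 0)

/-- The wedge product of two complex covectors, as an antisymmetric matrix. -/
def wedgeC {n : ℕ} (α β : Fin n → ℂ) : Matrix (Fin n) (Fin n) ℂ :=
  fun p q => α p * β q - α q * β p

/-! ### Auxiliary lemmas -/

@[simp] lemma vec6_0 {α : Type*} (a b c d e f : α) : (![a,b,c,d,e,f] : Fin 6 → α) 0 = a := rfl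
@[simp] lemma vec6_1 {α : Type*} (a b c d e f : α) : (![a,b,c,d,e,f] : Fin 6 → α) 1 = b := rfl
@[simp] lemma vec6_2 {α : Type*} (a b c d e f : α) : (![a,b,c,d,e,f] : Fin 6 → α) 2 = c := rfl
@[simp] lemma vec6_3 {α : Type*} (a b c d e f : α) : (![a,b,c,d,e,f] : Fin 6 → α) 3 = d := rfl
@[simp] lemma vec6_4 {α : Type*} (a b c d e f : α) : (![a,b,c,d,e,f] : Fin 6 → α) 4 = e := rfl
@[simp] lemma vec6_5 {α : Type*} (a b c d e f : α) : (![a,b,c,d,e,f] : Fin 6 → α) 5 = f := rfl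

lemma star_P01 {n : ℕ} (J : Matrix (Fin n) (Fin n) ℝ) (p q : Fin n) :
    starRingEnd ℂ (P01 J p q) = (if p = q then 1 else 0) - P01 J p q := by
  simp [P01, cplx, Matrix.add_apply, Matrix.smul_apply, Matrix.one_apply, Matrix.map_apply,
    apply_ite (starRingEnd ℂ), map_ofNat]
  split <;> ring

lemma vecMul_conj {n : ℕ} (J : Matrix (Fin n) (Fin n) ℝ) (α : Fin n → ℂ)
    (h : Matrix.vecMul α (P01 J) = 0) :
    Matrix.vecMul (fun p => starRingEnd ℂ (α p)) (P01 J) = fun p => starRingEnd ℂ (α p) := by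
  funext j
  have h' : starRingEnd ℂ (Matrix.vecMul α (P01 J) j) = 0 := by rw [h]; simp
  simp only [Matrix.vecMul, dotProduct, map_sum, _root_.map_mul, star_P01] at h'
  show ∑ p, starRingEnd ℂ (α p) * P01 J p j = _
  have expand : ∀ p : Fin n, starRingEnd ℂ (α p) * ((if p = j then (1:ℂ) else 0) - P01 J p j)
      = (if p = j then starRingEnd ℂ (α p) else 0) - starRingEnd ℂ (α p) * P01 J p j := by
    intro p; split <;> ring
  simp only [expand, Finset.sum_sub_distrib, Finset.sum_ite_eq', Finset.mem_univ, if_true] at h'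
  linear_combination -h'

lemma wedgeC_eq_vecMulVec {n : ℕ} (u v : Fin n → ℂ) :
    wedgeC u v = Matrix.vecMulVec u v - Matrix.vecMulVec v u := by
  funext p q; simp [wedgeC, Matrix.vecMulVec]; ring

lemma proj02_vecMulVec {n : ℕ} (J : Matrix (Fin n) (Fin n) ℝ) (u v : Fin n → ℂ) :
    proj02 J (Matrix.vecMulVec u v)
      = Matrix.vecMulVec (Matrix.vecMul u (P01 J)) (Matrix.vecMul v (P01 J)) := by
  have hrow : ∀ w : Fin n → ℂ, replicateRow (Fin 1) w * P01 J = replicateRow (Fin 1) (Matrix.vecMul w (P01 J)) := by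
    intro w
    have := Matrix.replicateCol_vecMul (ι := Fin 1) (P01 J) w
    calc replicateRow (Fin 1) w * P01 J = ((replicateRow (Fin 1) w * P01 J)ᵀ)ᵀ := by rw [Matrix.transpose_transpose]
    _ = (Matrix.replicateCol (Fin 1) (Matrix.vecMul w (P01 J)))ᵀ := by rw [this]
    _ = _ := Matrix.transpose_replicateCol _
  rw [proj02, Matrix.vecMulVec_eq (Fin 1), Matrix.vecMulVec_eq (Fin 1),
    Matrix.mul_assoc, Matrix.mul_assoc, hrow,
    ← Matrix.mul_assoc, ← Matrix.replicateCol_mulVec, Matrix.mulVec_transpose]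

lemma proj02_wedgeC {n : ℕ} (J : Matrix (Fin n) (Fin n) ℝ) (u v : Fin n → ℂ) :
    proj02 J (wedgeC u v) = wedgeC (Matrix.vecMul u (P01 J)) (Matrix.vecMul v (P01 J)) := by
  rw [wedgeC_eq_vecMulVec, wedgeC_eq_vecMulVec, proj02, Matrix.mul_sub, Matrix.sub_mul,
    ← proj02, ← proj02, proj02_vecMulVec, proj02_vecMulVec]

lemma proj02_add {n : ℕ} (J : Matrix (Fin n) (Fin n) ℝ) (X Y : Matrix (Fin n) (Fin n) ℂ) :
    proj02 J (X + Y) = proj02 J X + proj02 J Y := by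
  simp [proj02, Matrix.mul_add, Matrix.add_mul]

lemma proj02_sub {n : ℕ} (J : Matrix (Fin n) (Fin n) ℝ) (X Y : Matrix (Fin n) (Fin n) ℂ) :
    proj02 J (X - Y) = proj02 J X - proj02 J Y := by
  simp [proj02, Matrix.mul_sub, Matrix.sub_mul]

lemma proj02_smul {n : ℕ} (J : Matrix (Fin n) (Fin n) ℝ) (c : ℂ) (X : Matrix (Fin n) (Fin n) ℂ) :
    proj02 J (c • X) = c • proj02 J X := by
  simp [proj02, Matrix.mul_smul, Matrix.smul_mul]

lemma cplxD4 : cplx (-(wR 0 2) + wR 1 3)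
    = (-(1:ℂ)/2) • (wedgeC ![1, Complex.I, 0, 0, 0, 0] ![0, 0, 1, Complex.I, 0, 0]
      + wedgeC ![1, -Complex.I, 0, 0, 0, 0] ![0, 0, 1, -Complex.I, 0, 0]) := by
  funext p q
  fin_cases p <;> fin_cases q <;>
    · simp (config := { decide := true }) [wR, wedgeC, cplx, Matrix.map_apply, Matrix.add_apply,
        Matrix.neg_apply, Matrix.smul_apply] <;> norm_num [Complex.ext_iff]

lemma cplxD5 : cplx (-(wR 0 3) - wR 1 2)
    = (Complex.I/2) • (wedgeC ![1, Complex.I, 0, 0, 0, 0] ![0, 0, 1, Complex.I, 0, 0]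
      - wedgeC ![1, -Complex.I, 0, 0, 0, 0] ![0, 0, 1, -Complex.I, 0, 0]) := by
  funext p q
  fin_cases p <;> fin_cases q <;>
    · simp (config := { decide := true }) [wR, wedgeC, cplx, Matrix.map_apply, Matrix.sub_apply,
        Matrix.neg_apply, Matrix.smul_apply] <;> norm_num [Complex.ext_iff]

lemma dC_eq (α : Fin 6 → ℂ) :
    dC ![0, 0, 0, 0, -(wR 0 2) + wR 1 3, -(wR 0 3) - wR 1 2] α
      = α 4 • cplx (-(wR 0 2) + wR 1 3) + α 5 • cplx (-(wR 0 3) - wR 1 2) := by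
  rw [dC, Fin.sum_univ_six]
  simp [cplx]

/-- The standard complex structure compatible with the three given (1,0)-forms. -/
def J0 : Matrix (Fin 6) (Fin 6) ℝ :=
  !![0,-1,0,0,0,0; 1,0,0,0,0,0; 0,0,0,-1,0,2; 0,0,1,0,2,0; 0,0,0,0,0,-1; 0,0,0,0,1,0]

lemma J0_sq : J0 * J0 = -1 := by
  funext i j
  fin_cases i <;> fin_cases j <;>
    · simp (config := { decide := true }) only [J0, Matrix.mul_apply, Fin.sum_univ_six,
        Matrix.of_apply, vec6_0, vec6_1, vec6_2, vec6_3, vec6_4, vec6_5, Matrix.neg_apply,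
        Matrix.one_apply]
      norm_num

lemma hv1 : Matrix.vecMul (![1, Complex.I, 0, 0, 0, 0]) (P01 J0) = 0 := by
  funext j
  fin_cases j <;>
    · simp (config := { decide := true }) only [Matrix.vecMul, dotProduct,
        Fin.sum_univ_six, P01, cplx, J0, Matrix.one_apply, Matrix.add_apply, Matrix.smul_apply,
        Matrix.map_apply, Matrix.of_apply, vec6_0, vec6_1, vec6_2, vec6_3, vec6_4, vec6_5,
        Pi.zero_apply]
      norm_num [Complex.ext_iff]

lemma hv2 : Matrix.vecMul (![0, 0, 1, Complex.I, 1, -Complex.I]) (P01 J0) = 0 := by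
  funext j
  fin_cases j <;>
    · simp (config := { decide := true }) only [Matrix.vecMul, dotProduct,
        Fin.sum_univ_six, P01, cplx, J0, Matrix.one_apply, Matrix.add_apply, Matrix.smul_apply,
        Matrix.map_apply, Matrix.of_apply, vec6_0, vec6_1, vec6_2, vec6_3, vec6_4, vec6_5,
        Pi.zero_apply]
      norm_num [Complex.ext_iff]

lemma hv3 : Matrix.vecMul (![0, 0, 0, 0, 1, Complex.I]) (P01 J0) = 0 := by
  funext j
  fin_cases j <;>
    · simp (config := { decide := true }) only [Matrix.vecMul, dotProduct,
        Fin.sum_univ_six, P01, cplx, J0, Matrix.one_apply, Matrix.add_apply, Matrix.smul_apply,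
        Matrix.map_apply, Matrix.of_apply, vec6_0, vec6_1, vec6_2, vec6_3, vec6_4, vec6_5,
        Pi.zero_apply]
      norm_num [Complex.ext_iff]

lemma key (J : Matrix (Fin 6) (Fin 6) ℝ)
    (h1 : Matrix.vecMul (![1, Complex.I, 0, 0, 0, 0]) (P01 J) = 0)
    (h2 : Matrix.vecMul (![0, 0, 1, Complex.I, 1, -Complex.I]) (P01 J) = 0)
    (h3 : Matrix.vecMul (![0, 0, 0, 0, 1, Complex.I]) (P01 J) = 0)
    (α : Fin 6 → ℂ) :
    proj02 J (dC ![0, 0, 0, 0, -(wR 0 2) + wR 1 3, -(wR 0 3) - wR 1 2] α)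
      = ((-α 4 - Complex.I * α 5)/2) •
        wedgeC ![1, -Complex.I, 0, 0, 0, 0] ![0, 0, 1, -Complex.I, 1, Complex.I] := by
  have hc1 : Matrix.vecMul (![1, -Complex.I, 0, 0, 0, 0]) (P01 J)
      = ![1, -Complex.I, 0, 0, 0, 0] := by
    have h := vecMul_conj J _ h1
    have e : (fun p => starRingEnd ℂ ((![1, Complex.I, 0, 0, 0, 0] : Fin 6 → ℂ) p))
        = ![1, -Complex.I, 0, 0, 0, 0] := by
      funext p; fin_cases p <;> simp
    rwa [e] at h
  have hc2 : Matrix.vecMul (![0, 0, 1, -Complex.I, 1, Complex.I]) (P01 J)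
      = ![0, 0, 1, -Complex.I, 1, Complex.I] := by
    have h := vecMul_conj J _ h2
    have e : (fun p => starRingEnd ℂ ((![0, 0, 1, Complex.I, 1, -Complex.I] : Fin 6 → ℂ) p))
        = ![0, 0, 1, -Complex.I, 1, Complex.I] := by
      funext p; fin_cases p <;> simp
    rwa [e] at h
  have hbb : Matrix.vecMul (![0, 0, 1, -Complex.I, 0, 0]) (P01 J)
      = ![0, 0, 1, -Complex.I, 1, Complex.I] := by
    have hsub : (![0, 0, 1, -Complex.I, 0, 0] : Fin 6 → ℂ)
        = ![0, 0, 1, -Complex.I, 1, Complex.I] - ![0, 0, 0, 0, 1, Complex.I] := by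
      funext p; fin_cases p <;> simp
    rw [hsub, Matrix.sub_vecMul, hc2, h3, sub_zero]
  have pW1 : proj02 J (wedgeC ![1, Complex.I, 0, 0, 0, 0] ![0, 0, 1, Complex.I, 0, 0]) = 0 := by
    rw [proj02_wedgeC, h1]
    funext p q; simp [wedgeC]
  have pW2 : proj02 J (wedgeC ![1, -Complex.I, 0, 0, 0, 0] ![0, 0, 1, -Complex.I, 0, 0])
      = wedgeC ![1, -Complex.I, 0, 0, 0, 0] ![0, 0, 1, -Complex.I, 1, Complex.I] := by
    rw [proj02_wedgeC, hc1, hbb]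
  rw [dC_eq, cplxD4, cplxD5, proj02_add, proj02_smul, proj02_smul, proj02_smul, proj02_smul,
    proj02_add, proj02_sub, pW1, pW2, zero_add, zero_sub]
  module

/-- On the Iwasawa Lie algebra (`φ¹ = e¹ + ie²`, `φ² = e³ + ie⁴`, `φ³ = e⁵ + ie⁶`,
`dφ¹ = dφ² = 0`, `dφ³ = -φ¹∧φ²`), the almost complex structure defined by declaring
`ω¹ = φ¹`, `ω² = φ² + φ̄³`, `ω³ = φ³` to be the `(1,0)`-forms is well-defined and has
Nijenhuis rank exactly `1`. -/
theorem iwasawa_rank_one :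
    (∃ J : Matrix (Fin 6) (Fin 6) ℝ, J * J = -1 ∧
      Matrix.vecMul (![1, Complex.I, 0, 0, 0, 0]) (P01 J) = 0 ∧
      Matrix.vecMul (![0, 0, 1, Complex.I, 1, -Complex.I]) (P01 J) = 0 ∧
      Matrix.vecMul (![0, 0, 0, 0, 1, Complex.I]) (P01 J) = 0) ∧
    ∀ J : Matrix (Fin 6) (Fin 6) ℝ, J * J = -1 →
      Matrix.vecMul (![1, Complex.I, 0, 0, 0, 0]) (P01 J) = 0 →
      Matrix.vecMul (![0, 0, 1, Complex.I, 1, -Complex.I]) (P01 J) = 0 →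
      Matrix.vecMul (![0, 0, 0, 0, 1, Complex.I]) (P01 J) = 0 →
      nijRank ![0, 0, 0, 0, -(wR 0 2) + wR 1 3, -(wR 0 3) - wR 1 2] J = 1 := by
  constructor
  · exact ⟨J0, J0_sq, hv1, hv2, hv3⟩
  · intro J _hJ h1 h2 h3
    have hW : wedgeC ![1, -Complex.I, 0, 0, 0, 0] ![0, 0, 1, -Complex.I, 1, Complex.I]
        ≠ (0 : Matrix (Fin 6) (Fin 6) ℂ) := by
      intro h
      have := congrFun (congrFun h 0) 2
      simp [wedgeC] at this
    have hspan : Submodule.span ℂ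
        {ω : Matrix (Fin 6) (Fin 6) ℂ |
          ∃ α : Fin 6 → ℂ, Matrix.vecMul α (P01 J) = 0 ∧
            ω = proj02 J (dC ![0, 0, 0, 0, -(wR 0 2) + wR 1 3, -(wR 0 3) - wR 1 2] α)}
        = ℂ ∙ wedgeC ![1, -Complex.I, 0, 0, 0, 0] ![0, 0, 1, -Complex.I, 1, Complex.I] := by
      apply le_antisymm
      · rw [Submodule.span_le]
        rintro ω ⟨α, hα, rfl⟩
        rw [key J h1 h2 h3 α]
        exact Submodule.smul_mem _ _ (Submodule.mem_span_singleton_self _)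
      · rw [Submodule.span_singleton_le_iff_mem]
        have hmem : proj02 J (dC ![0, 0, 0, 0, -(wR 0 2) + wR 1 3, -(wR 0 3) - wR 1 2]
            ![0, 0, 1, Complex.I, 1, -Complex.I]) ∈ Submodule.span ℂ
            {ω : Matrix (Fin 6) (Fin 6) ℂ |
              ∃ α : Fin 6 → ℂ, Matrix.vecMul α (P01 J) = 0 ∧
                ω = proj02 J (dC ![0, 0, 0, 0, -(wR 0 2) + wR 1 3, -(wR 0 3) - wR 1 2] α)} :=
          Submodule.subset_span ⟨_, h2, rfl⟩
        have hval : proj02 J (dC ![0, 0, 0, 0, -(wR 0 2) + wR 1 3, -(wR 0 3) - wR 1 2]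
            ![0, 0, 1, Complex.I, 1, -Complex.I])
            = (-1 : ℂ) • wedgeC ![1, -Complex.I, 0, 0, 0, 0]
                ![0, 0, 1, -Complex.I, 1, Complex.I] := by
          rw [key J h1 h2 h3]
          congr 1
          simp [Complex.ext_iff]
          norm_num
        have hW' : wedgeC ![1, -Complex.I, 0, 0, 0, 0] ![0, 0, 1, -Complex.I, 1, Complex.I]
            = (-1 : ℂ) • proj02 J (dC ![0, 0, 0, 0, -(wR 0 2) + wR 1 3, -(wR 0 3) - wR 1 2]
                ![0, 0, 1, Complex.I, 1, -Complex.I]) := by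
          rw [hval, smul_smul]; norm_num
        rw [hW']
        exact Submodule.smul_mem _ _ hmem
    unfold nijRank
    rw [hspan]
    exact finrank_span_singleton hW
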